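/- (Depth-first exploration: active vertices lie on a path) In the depth-first exploration of a cluster started at x, let X̃_n be the set of explored vertices a for which some incident edge has not yet been explored or marked unexplored. Then at every step n there is a unique vertex a ∈ X̃_n farthest from x in the current spanning tree T_n, and all other vertices of X̃_n lie on the unique path in T_n from a to the root x. -/

import Mathlib

/- STATEMENT 8: in the depth-first exploration of a cluster started at `x`, at every
step there is a unique farthest (in the current spanning tree) active vertex, and all
other active vertices lie on the tree path from it to the root `x`. -/

/-- State of the depth-first exploration: explored vertices `X`, tree edges `T`,
explored edges `E`, unexplored (surplus) edges `U`. -/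
structure DFSState (V : Type) where
  X : Finset V
  T : Finset (Sym2 V)
  E : Finset (Sym2 V)
  U : Finset (Sym2 V)

/-- The current spanning tree, as a graph. -/
def DFSState.tree {V : Type} (σ : DFSState V) : SimpleGraph V :=
  SimpleGraph.fromEdgeSet (↑σ.T)

/-- Active vertices: explored vertices with some incident edge of `G` neither
explored nor marked unexplored. -/
def DFSState.active {V : Type} [DecidableEq V] (G : SimpleGraph V) (σ : DFSState V) : Set V :=
  {a | a ∈ σ.X ∧ ∃ b, G.Adj a b ∧ s(a, b) ∉ σ.E ∪ σ.U}

/-- One step of the depth-first exploration of `G` with configuration `ω`, rooted at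
`x`: select an edge `{a,b}` not in `W = E ∪ U` at an active vertex `a` farthest from
`x` in the tree; if `b` is unexplored check its occupancy (adding it to the tree if
open), otherwise mark the edge as unexplored (surplus). -/
def DFSStep {V : Type} [DecidableEq V] (G : SimpleGraph V) (ω : Sym2 V → Bool) (x : V)
    (σ σ' : DFSState V) : Prop :=
  ∃ a b, G.Adj a b ∧ a ∈ σ.X ∧ s(a, b) ∉ σ.E ∪ σ.U ∧
    (∀ a' ∈ σ.active G, σ.tree.dist x a' ≤ σ.tree.dist x a) ∧
    ((b ∈ σ.X ∧ σ' = ⟨σ.X, σ.T, σ.E, insert s(a, b) σ.U⟩) ∨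
     (b ∉ σ.X ∧ ω s(a, b) = true ∧
        σ' = ⟨insert b σ.X, insert s(a, b) σ.T, insert s(a, b) σ.E, σ.U⟩) ∨
     (b ∉ σ.X ∧ ω s(a, b) = false ∧ σ' = ⟨σ.X, σ.T, insert s(a, b) σ.E, σ.U⟩))

/-- Reachability from the initial state of the exploration rooted at `x`. -/
def DFSReachable {V : Type} [DecidableEq V] (G : SimpleGraph V) (ω : Sym2 V → Bool)
    (x : V) (σ : DFSState V) : Prop :=
  Relation.ReflTransGen (DFSStep G ω x) ⟨{x}, ∅, ∅, ∅⟩ σ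


open SimpleGraph


open SimpleGraph

lemma path_length_eq_dist {V : Type} [DecidableEq V] {H : SimpleGraph V} (hH : H.IsAcyclic)
    {u v : V} (p : H.Walk u v) (hp : p.IsPath) : p.length = H.dist u v := by
  have hr : H.Reachable u v := ⟨p⟩
  obtain ⟨q, hq⟩ := hr.exists_walk_length_eq_dist
  have h1 : (⟨p, hp⟩ : H.Path u v) = ⟨q.bypass, q.bypass_isPath⟩ := hH.path_unique _ _
  have h2 : p = q.bypass := congrArg Subtype.val h1
  have h3 : q.bypass.length ≤ q.length := q.length_bypass_le
  have h4 : H.dist u v ≤ q.bypass.length := H.dist_le _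
  have h2' := congrArg Walk.length h2
  omega

lemma dist_dropUntil {V : Type} [DecidableEq V] {H : SimpleGraph V} (hH : H.IsAcyclic)
    {u v c : V} (p : H.Walk u v) (hp : p.IsPath) (hc : c ∈ p.support) :
    H.dist v c = (p.dropUntil c hc).length := by
  rw [H.dist_comm]
  exact (path_length_eq_dist hH _ (hp.dropUntil hc)).symm

lemma dist_lt_of_mem_support {V : Type} [DecidableEq V] {H : SimpleGraph V}
    (hH : H.IsAcyclic) {u v c : V} (p : H.Walk u v) (hp : p.IsPath)
    (hc : c ∈ p.support) (hne : c ≠ u) : H.dist v c < H.dist v u := by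
  have h1 : H.dist v c = (p.dropUntil c hc).length := dist_dropUntil hH p hp hc
  have h2 : H.dist v u = p.length := by
    rw [H.dist_comm]; exact (path_length_eq_dist hH p hp).symm
  have h3 := congrArg Walk.length (p.take_spec hc)
  rw [Walk.length_append] at h3
  have h4 : (p.takeUntil c hc).length ≠ 0 := by
    intro h0
    exact hne (Walk.eq_of_length_eq_zero h0).symm
  omega

lemma exists_top {V : Type} {H : SimpleGraph V} (S : Set V) (hS : S.Nonempty) :
    ∀ {a x : V} (p : H.Walk a x), p.IsPath → (∀ c ∈ S, c ∈ p.support) →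
    ∃ a' ∈ S, ∃ q : H.Walk a' x, q.IsPath ∧ ∀ c ∈ S, c ∈ q.support := by
  intro a x p
  induction p with
  | @nil u =>
    intro hp hcov
    obtain ⟨s, hs⟩ := hS
    have hsx := hcov s hs
    simp only [SimpleGraph.Walk.support_nil, List.mem_singleton] at hsx
    subst hsx
    exact ⟨s, hs, SimpleGraph.Walk.nil, SimpleGraph.Walk.IsPath.nil, hcov⟩
  | @cons u w y h p ih =>
    intro hp hcov
    by_cases hu : u ∈ S
    · exact ⟨u, hu, SimpleGraph.Walk.cons h p, hp, hcov⟩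
    · refine ih hp.of_cons (fun c hc => ?_)
      have := hcov c hc
      simp only [SimpleGraph.Walk.support_cons, List.mem_cons] at this
      rcases this with rfl | h'
      · exact absurd hc hu
      · exact h'

lemma walk_support_subset {V : Type} {H : SimpleGraph V} {X : Set V}
    (hX : ∀ u w, H.Adj u w → u ∈ X) {u v : V} (p : H.Walk u v) (hu : u ∈ X) :
    ∀ c ∈ p.support, c ∈ X := by
  induction p with
  | nil => intro c hc; simp at hc; rwa [hc]
  | @cons u w x h p ih =>
    intro c hc
    simp only [Walk.support_cons, List.mem_cons] at hc
    rcases hc with rfl | hc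
    · exact hu
    · exact ih (hX _ _ h.symm) c hc

lemma acyclic_insert_pendant {V : Type} [DecidableEq V] (S : Set (Sym2 V)) (a b : V)
    (hab : a ≠ b)
    (hac : (SimpleGraph.fromEdgeSet S).IsAcyclic)
    (hb : ∀ u w : V, (SimpleGraph.fromEdgeSet S).Adj u w → u ≠ b) :
    (SimpleGraph.fromEdgeSet (insert s(a, b) S)).IsAcyclic := by
  set H := SimpleGraph.fromEdgeSet S with hH
  set H' := SimpleGraph.fromEdgeSet (insert s(a, b) S) with hH'
  -- neighbors of b in H' are exactly a
  have hnbr : ∀ u : V, H'.Adj b u → u = a := by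
    intro u hu
    rw [hH', fromEdgeSet_adj] at hu
    obtain ⟨hmem, hne⟩ := hu
    rcases Set.mem_insert_iff.mp hmem with heq | hS
    · rw [Sym2.eq_iff] at heq
      rcases heq with ⟨h1, h2⟩ | ⟨h1, h2⟩
      · exact absurd h1.symm hab
      · exact h2
    · exact absurd rfl (hb b u ((fromEdgeSet_adj _).mpr ⟨hS, hne⟩))
  intro v c hc
  by_cases he : s(a, b) ∈ c.edges
  · -- rotate the cycle to start at b
    have hbsup : b ∈ c.support := c.snd_mem_support_of_mem_edges he
    have hd := hc.rotate hbsup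
    set d := c.rotate b hbsup with hdd
    clear_value d
    clear hc he hbsup hdd
    cases d with
    | nil => exact hd.ne_nil rfl
    | cons h t =>
      have h3 := hd.three_le_length
      rename_i u
      have hua : u = a := hnbr u h
      subst hua
      have htb : b ≠ u := fun h' => hab h'.symm
      obtain ⟨w, h2, q, hq⟩ := SimpleGraph.Walk.exists_eq_cons_of_ne htb t.reverse
      have hwa : w = u := hnbr w h2
      subst hwa
      -- t.support = q.support.reverse ++ [b]
      have hts : t.support = q.support.reverse ++ [b] := by
        have h7 := congrArg SimpleGraph.Walk.support hq
        rw [SimpleGraph.Walk.support_reverse, SimpleGraph.Walk.support_cons] at h7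
        have h8 := congrArg List.reverse h7
        simpa using h8
      have hnd : t.support.Nodup := by
        have h9 := hd.support_nodup
        simpa using h9
      rw [hts] at hnd
      cases q with
      | nil =>
        -- then t has length 1, total cycle length 2 < 3
        have h10 : t.length = 1 := by
          have h11 := congrArg SimpleGraph.Walk.length hq
          simpa using h11
        simp [SimpleGraph.Walk.length_cons, h10] at h3
      | cons h4 r =>
        have hmem : w ∈ r.support := SimpleGraph.Walk.end_mem_support r
        simp only [SimpleGraph.Walk.support_cons, List.reverse_cons] at hnd
        have h12 := hnd.sublist (List.sublist_append_left _ _)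
        have h5 : w ∈ (r.support.reverse : List V) := by simp_all
        have h6 : ((r.support.reverse ++ [w]) : List V).Nodup := h12
        rw [List.nodup_append] at h6
        exact h6.2.2 w h5 w (List.mem_singleton_self w) rfl
  · -- transfer the cycle to H
    have hsub : ∀ e ∈ c.edges, e ∈ H.edgeSet := by
      intro e hee
      have h1 : e ∈ H'.edgeSet := c.edges_subset_edgeSet hee
      rw [hH', edgeSet_fromEdgeSet] at h1
      rw [hH, edgeSet_fromEdgeSet]
      rcases Set.mem_insert_iff.mp h1.1 with heq | hS
      · exact absurd (heq ▸ hee) he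
      · exact ⟨hS, h1.2⟩
    exact hac _ (hc.transfer hsub)

def DFSInv {V : Type} [DecidableEq V] (G : SimpleGraph V) (x : V) (σ : DFSState V) : Prop :=
  x ∈ σ.X ∧
  (∀ u w : V, σ.tree.Adj u w → u ∈ σ.X) ∧
  σ.tree.IsAcyclic ∧
  ((σ.active G).Nonempty →
    ∃ a ∈ σ.active G, ∃ p : σ.tree.Walk a x, p.IsPath ∧ ∀ c ∈ σ.active G, c ∈ p.support)

lemma dfsInv_init {V : Type} [DecidableEq V] (G : SimpleGraph V) (x : V) :
    DFSInv G x ⟨{x}, ∅, ∅, ∅⟩ := by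
  have htree : (⟨{x}, ∅, ∅, ∅⟩ : DFSState V).tree = ⊥ := by
    simp [DFSState.tree]
  refine ⟨Finset.mem_singleton_self x, ?_, ?_, ?_⟩
  · intro u w h
    rw [htree] at h
    exact absurd h (by simp)
  · rw [htree]; exact isAcyclic_bot
  · rintro ⟨s, hs⟩
    have hsx : s = x := Finset.mem_singleton.mp hs.1
    subst hsx
    exact ⟨s, hs, Walk.nil, Walk.IsPath.nil,
      fun c hc => by
        have : c = s := Finset.mem_singleton.mp hc.1
        simp [this]⟩

lemma dfsInv_step {V : Type} [DecidableEq V] {G : SimpleGraph V} {ω : Sym2 V → Bool}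
    {x : V} {σ σ' : DFSState V} (hinv : DFSInv G x σ) (hstep : DFSStep G ω x σ σ') :
    DFSInv G x σ' := by
  obtain ⟨hx, hXadj, hacyc, hpath⟩ := hinv
  obtain ⟨a, b, hadj, haX, hnW, hfar, hcase⟩ := hstep
  have haact : a ∈ σ.active G := ⟨haX, b, hadj, hnW⟩
  obtain ⟨ai, haiact, p, hp, hcov⟩ := hpath ⟨a, haact⟩
  have hasup : a ∈ p.support := hcov a haact
  have hai : ai = a := by
    by_contra hne
    have h1 := dist_lt_of_mem_support hacyc p hp hasup (fun h => hne h.symm)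
    have h2 := hfar ai haiact
    omega
  subst hai
  rcases hcase with ⟨hbX, rfl⟩ | ⟨hbX, hω, rfl⟩ | ⟨hbX, hω, rfl⟩
  · -- surplus edge added to U; tree and X unchanged
    have hsub : DFSState.active G ⟨σ.X, σ.T, σ.E, insert s(ai, b) σ.U⟩ ⊆ σ.active G := by
      rintro c ⟨hc1, d, hd1, hd2⟩
      refine ⟨hc1, d, hd1, fun hm => hd2 ?_⟩
      rcases Finset.mem_union.mp hm with h | h
      · exact Finset.mem_union_left _ h
      · exact Finset.mem_union_right _ (Finset.mem_insert_of_mem h)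
    refine ⟨hx, hXadj, hacyc, fun hne' => ?_⟩
    exact exists_top _ hne' p hp (fun c hc => hcov c (hsub hc))
  · -- new vertex b added
    have hab : ai ≠ b := fun h => hbX (h ▸ haX)
    have htree : (⟨insert b σ.X, insert s(ai, b) σ.T, insert s(ai, b) σ.E, σ.U⟩ :
        DFSState V).tree
        = SimpleGraph.fromEdgeSet (insert s(ai, b) (↑σ.T : Set (Sym2 V))) := by
      simp [DFSState.tree]
    have hle : σ.tree ≤ SimpleGraph.fromEdgeSet (insert s(ai, b) (↑σ.T : Set (Sym2 V))) :=
      fromEdgeSet_mono (Set.subset_insert _ _)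
    have hb' : ∀ u w : V, σ.tree.Adj u w → u ≠ b := by
      intro u w h hub
      exact hbX (hub ▸ hXadj u w h)
    have hsub : DFSState.active G ⟨insert b σ.X, insert s(ai, b) σ.T,
        insert s(ai, b) σ.E, σ.U⟩ ⊆ σ.active G ∪ {b} := by
      rintro c ⟨hc1, d, hd1, hd2⟩
      rcases Finset.mem_insert.mp hc1 with h | h
      · exact Set.mem_union_right _ (by simp [h])
      · refine Set.mem_union_left _ ⟨h, d, hd1, fun hm => hd2 ?_⟩
        rcases Finset.mem_union.mp hm with h' | h'
        · exact Finset.mem_union_left _ (Finset.mem_insert_of_mem h')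
        · exact Finset.mem_union_right _ h'
    refine ⟨Finset.mem_insert_of_mem hx, ?_, ?_, ?_⟩
    · intro u w h
      rw [htree, fromEdgeSet_adj] at h
      rcases Set.mem_insert_iff.mp h.1 with heq | hS
      · rw [Sym2.eq_iff] at heq
        rcases heq with ⟨rfl, -⟩ | ⟨rfl, -⟩
        · exact Finset.mem_insert_of_mem haX
        · exact Finset.mem_insert_self _ _
      · exact Finset.mem_insert_of_mem (hXadj u w ((fromEdgeSet_adj _).mpr ⟨hS, h.2⟩))
    · rw [htree]
      exact acyclic_insert_pendant _ ai b hab hacyc hb'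
    · intro hne'
      rw [htree]
      -- build the extended path
      have hba : (SimpleGraph.fromEdgeSet (insert s(ai, b) (↑σ.T : Set (Sym2 V)))).Adj b ai := by
        rw [fromEdgeSet_adj]
        exact ⟨by rw [Sym2.eq_swap]; exact Set.mem_insert _ _, fun h => hab h.symm⟩
      have hbsup : b ∉ p.support := by
        intro hmem
        exact hbX (walk_support_subset (X := (↑σ.X : Set V))
          (fun u w h => hXadj u w h) p haX b hmem)
      set p' : (SimpleGraph.fromEdgeSet (insert s(ai, b) (↑σ.T : Set (Sym2 V)))).Walk ai x :=
        p.mapLe hle with hp'def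
      have hp'supp : p'.support = p.support := by
        rw [hp'def, Walk.mapLe, Walk.support_map]
        exact List.map_id' _
      have hq : (Walk.cons hba p').IsPath := by
        refine (hp.mapLe hle).cons ?_
        rw [hp'supp]; exact hbsup
      refine exists_top _ hne' (Walk.cons hba p') hq ?_
      intro c hc
      rcases hsub hc with h | h
      · simp only [Walk.support_cons, List.mem_cons]
        exact Or.inr (hp'supp ▸ hcov c h)
      · simp only [Set.mem_singleton_iff] at h
        simp [h]
  · -- closed edge added to E; tree and X unchanged
    have hsub : DFSState.active G ⟨σ.X, σ.T, insert s(ai, b) σ.E, σ.U⟩ ⊆ σ.active G := by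
      rintro c ⟨hc1, d, hd1, hd2⟩
      refine ⟨hc1, d, hd1, fun hm => hd2 ?_⟩
      rcases Finset.mem_union.mp hm with h | h
      · exact Finset.mem_union_left _ (Finset.mem_insert_of_mem h)
      · exact Finset.mem_union_right _ h
    refine ⟨hx, hXadj, hacyc, fun hne' => ?_⟩
    exact exists_top _ hne' p hp (fun c hc => hcov c (hsub hc))


lemma dfsInv_reachable {V : Type} [DecidableEq V] {G : SimpleGraph V} {ω : Sym2 V → Bool}
    {x : V} {σ : DFSState V} (h : DFSReachable G ω x σ) : DFSInv G x σ := by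
  induction h with
  | refl => exact dfsInv_init G x
  | tail _ hstep ih => exact dfsInv_step ih hstep

theorem stmt8 {V : Type} [Fintype V] [DecidableEq V]
    (G : SimpleGraph V) (ω : Sym2 V → Bool) (x : V) (σ : DFSState V)
    (hσ : DFSReachable G ω x σ) (hne : (σ.active G).Nonempty) :
    ∃ a ∈ σ.active G,
      (∀ a' ∈ σ.active G, σ.tree.dist x a' ≤ σ.tree.dist x a) ∧
      (∀ a' ∈ σ.active G, σ.tree.dist x a' = σ.tree.dist x a → a' = a) ∧
      ∃ p : σ.tree.Walk a x, p.IsPath ∧ ∀ a' ∈ σ.active G, a' ∈ p.support := by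
  have hinv : DFSInv G x σ := dfsInv_reachable hσ
  obtain ⟨hx, hXadj, hacyc, hpath⟩ := hinv
  obtain ⟨ai, hai, p, hp, hcov⟩ := hpath hne
  obtain ⟨a, haS, q, hq, hqcov⟩ := exists_top (σ.active G) hne p hp hcov
  refine ⟨a, haS, ?_, ?_, q, hq, hqcov⟩
  · intro a' ha'
    by_cases h : a' = a
    · rw [h]
    · exact le_of_lt (dist_lt_of_mem_support hacyc q hq (hqcov a' ha') h)
  · intro a' ha' hd
    by_contra h
    have := dist_lt_of_mem_support hacyc q hq (hqcov a' ha') h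
    omega
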